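/- If P is a Markov transition kernel on a product space Z = Z₀ × ⋯ × Z_K whose transitions depend only on the first coordinate, i.e. P(· | z₀,…,z_K) = P(· | z₀), and each coordinate marginal kernel P_k(z*_k | z₀) = ∫ P(z*₀,…,z*_K | z₀) dz*_{-k} has π as a stationary measure, then the measure π*(·) = ∫ P(· | z₀) π(dz₀) on the product space is a stationary measure for P. -/

import Mathlib

open MeasureTheory


lemma my_bind_map {α β γ : Type*} [MeasurableSpace α] [MeasurableSpace β]
    [MeasurableSpace γ] (μ : Measure α) {f : α → β} {g : β → Measure γ}
    (hf : Measurable f) (hg : Measurable g) :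
    (μ.map f).bind g = μ.bind (fun a => g (f a)) := by
  ext s hs
  rw [Measure.bind_apply hs hg.aemeasurable, lintegral_map (show Measurable fun y => (g y) s from (Measure.measurable_coe hs).comp hg) hf,
    Measure.bind_apply hs (show Measurable fun a => g (f a) from hg.comp hf).aemeasurable]

/-- If the product-space kernel `P z = p0 (z 0)` depends only on the
first coordinate and every coordinate marginal kernel leaves `π` invariant, then
`π* = π.bind p0` is stationary for the product-space kernel. -/
theorem stmt0 {α : Type*} [MeasurableSpace α] (K : ℕ)
    (π : Measure α) [IsProbabilityMeasure π]
    (p0 : α → Measure (Fin (K + 1) → α))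
    (hmeas : Measurable p0)
    (hprob : ∀ z₀, IsProbabilityMeasure (p0 z₀))
    (hstat : ∀ k : Fin (K + 1),
      π.bind (fun z₀ => (p0 z₀).map (fun w => w k)) = π) :
    (π.bind p0).bind (fun z => p0 (z 0)) = π.bind p0 := by
  have hpi0 : Measurable fun z : Fin (K + 1) → α => z 0 := measurable_pi_apply 0
  have hg : Measurable fun z : Fin (K + 1) → α => p0 (z 0) := hmeas.comp hpi0
  have hf : Measurable fun z₀ => (p0 z₀).map (fun w : Fin (K + 1) → α => w 0) :=
    (Measure.measurable_map _ hpi0).comp hmeas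
  calc (π.bind p0).bind (fun z => p0 (z 0))
      = π.bind (fun z₀ => (p0 z₀).bind (fun z => p0 (z 0))) :=
        Measure.bind_bind hmeas.aemeasurable hg.aemeasurable
    _ = π.bind (fun z₀ => ((p0 z₀).map (fun w => w 0)).bind p0) := by
        congr 1
        funext z₀
        rw [my_bind_map _ hpi0 hmeas]
    _ = (π.bind (fun z₀ => (p0 z₀).map (fun w => w 0))).bind p0 :=
        (Measure.bind_bind hf.aemeasurable hmeas.aemeasurable).symm
    _ = π.bind p0 := by rw [hstat 0]
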